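/- arXiv:2309.10286 — 3 statements merged into one kernel-verified Lean document; each statement's English description precedes it below -/
import Mathlib

section
/- For every real c ≥ 1 and every real x ≥ 2, we have 0 ≤ e^{−1/c} − (1 − 1/(cx))^x ≤ A/x, where A = 5·e^{−1/c}/c². -/
open Real

theorem exp_sub_rpow_bound (c x : ℝ) (hc : 1 ≤ c) (hx : 2 ≤ x) :
    0 ≤ exp (-1/c) - (1 - 1/(c*x)) ^ x ∧
    exp (-1/c) - (1 - 1/(c*x)) ^ x ≤ (5 * exp (-1/c) / c^2) / x := by
  have hc0 : (0:ℝ) < c := by linarith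
  have hx0 : (0:ℝ) < x := by linarith
  have hcx : (2:ℝ) ≤ c * x := by nlinarith
  have hcx0 : (0:ℝ) < c * x := by linarith
  set t : ℝ := 1/(c*x) with ht_def
  have ht0 : 0 < t := by positivity
  have ht : t ≤ 1/2 := by
    rw [ht_def, div_le_iff₀ hcx0]; linarith
  have h1t : 0 < 1 - t := by linarith
  have hrw : (1 - t) ^ x = exp (log (1 - t) * x) := Real.rpow_def_of_pos h1t x
  have htx : t * x = 1/c := by rw [ht_def]; field_simp
  have ht2x : t^2 * x = 1/(c^2*x) := by
    rw [ht_def]; field_simp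
  have hlog_le : log (1 - t) ≤ -t := by
    have := Real.log_le_sub_one_of_pos h1t; linarith
  have hlog_ge : -t - 2*t^2 ≤ log (1 - t) := by
    have h := Real.log_le_sub_one_of_pos (show (0:ℝ) < (1-t)⁻¹ by positivity)
    rw [Real.log_inv] at h
    have h2 : (1-t)⁻¹ - 1 = t / (1-t) := by field_simp; ring
    have h3 : t / (1-t) ≤ t + 2*t^2 := by
      rw [div_le_iff₀ h1t]; nlinarith
    linarith
  have hexp_le : exp (log (1 - t) * x) ≤ exp (-1/c) := by
    apply Real.exp_le_exp.mpr
    have h1 := mul_le_mul_of_nonneg_right hlog_le (le_of_lt hx0)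
    have h2 : -t * x = -1/c := by rw [ht_def]; field_simp
    linarith
  constructor
  · rw [hrw]; linarith
  · rw [hrw]
    have hE : 0 < exp (-1/c) := Real.exp_pos _
    have hu : -1/c - 2/(c^2*x) ≤ log (1 - t) * x := by
      have := mul_le_mul_of_nonneg_right hlog_ge (le_of_lt hx0)
      have h4 : (-t - 2*t^2) * x = -1/c - 2/(c^2*x) := by
        have : (-t - 2*t^2) * x = -(t*x) - 2*(t^2*x) := by ring
        rw [this, htx, ht2x]; ring
      linarith
    have hexp_ge : exp (-1/c) * (1 - 2/(c^2*x)) ≤ exp (log (1 - t) * x) := by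
      have key : exp (log (1 - t) * x) = exp (-1/c) * exp (log (1 - t) * x + 1/c) := by
        rw [← Real.exp_add]; ring_nf
      rw [key]
      apply mul_le_mul_of_nonneg_left _ (le_of_lt hE)
      have h5 : (log (1 - t) * x + 1/c) + 1 ≤ exp (log (1 - t) * x + 1/c) :=
        Real.add_one_le_exp _
      have : 1 - 2/(c^2*x) ≤ 1 + (log (1 - t) * x + 1/c) := by
        have : -1/c = -(1/c) := by ring
        nlinarith [hu]
      linarith
    have hc2x : (0:ℝ) < c^2 * x := by positivity
    have : exp (-1/c) - exp (log (1 - t) * x) ≤ exp (-1/c) * (2/(c^2*x)) := by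
      nlinarith [hexp_ge]
    have hfin : exp (-1/c) * (2/(c^2*x)) ≤ (5 * exp (-1/c) / c^2) / x := by
      rw [div_div]
      have heq : exp (-1/c) * (2/(c^2*x)) = 2 * exp (-1/c) / (c^2*x) := by ring
      rw [heq]
      gcongr
      linarith
    linarith
end

section
/- Let α ∈ (1, 2], c ≥ 1 a real constant, and define Δ(d) = P(d, 1/(cd)) − P(d, α^{−1/2}/(cd)) where P(d, p) = 1 − (1 − p)^d. Then for all integers d ≥ 2, Δ(d) ≥ (e^{−1/c} − A/(d − 1))·(1 − α^{−1/2})/c, where A = 5e^{−1/c}/c². In particular, Δ(d) is bounded below by a positive constant independent of d for all sufficiently large d. -/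
open Real

lemma pow_sub_pow_ge_aux (x y : ℝ) (hy : 0 ≤ y) (hxy : y ≤ x) :
    ∀ n : ℕ, ((n:ℝ)+1)*(x-y)*y^n ≤ x^(n+1) - y^(n+1) := by
  intro n
  induction n with
  | zero => simp
  | succ n ih =>
    have hx : 0 ≤ x := le_trans hy hxy
    have hyn : (0:ℝ) ≤ y^n := pow_nonneg hy n
    have h1 : x^(n+1+1) - y^(n+1+1) = x*(x^(n+1) - y^(n+1)) + (x-y)*y^(n+1) := by ring
    rw [h1]
    have h2 : x*(((n:ℝ)+1)*(x-y)*y^n) ≤ x*(x^(n+1) - y^(n+1)) :=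
      mul_le_mul_of_nonneg_left ih hx
    have h3 : ((n:ℝ)+1)*(x-y)*y^(n+1) ≤ x*(((n:ℝ)+1)*(x-y)*y^n) := by
      have hnn : (0:ℝ) ≤ ((n:ℝ)+1)*(x-y) :=
        mul_nonneg (by positivity) (sub_nonneg.mpr hxy)
      have h := mul_le_mul_of_nonneg_left
        (mul_le_mul_of_nonneg_right hxy hyn) hnn
      calc ((n:ℝ)+1)*(x-y)*y^(n+1) = ((n:ℝ)+1)*(x-y)*(y*y^n) := by ring
        _ ≤ ((n:ℝ)+1)*(x-y)*(x*y^n) := h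
        _ = x*(((n:ℝ)+1)*(x-y)*y^n) := by ring
    push_cast
    linarith

lemma key_exp_le (c : ℝ) (hc : 1 ≤ c) (n : ℕ) (hn : 1 ≤ n) :
    exp (-1/c) ≤ (1 - 1/(c*((n:ℝ)+1)))^n := by
  have hc0 : 0 < c := lt_of_lt_of_le one_pos hc
  have hn0 : (1:ℝ) ≤ (n:ℝ) := by exact_mod_cast hn
  have hnpos : (0:ℝ) < n := lt_of_lt_of_le one_pos hn0
  set t : ℝ := 1/(c*n) with ht_def
  have ht : 0 < t := by positivity
  have hcn : (0:ℝ) < c*n := by positivity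
  have hcn1 : (0:ℝ) < c*((n:ℝ)+1) := by positivity
  have h1 : exp (-t) ≤ 1 - 1/(c*((n:ℝ)+1)) := by
    have h2 : 1 + t ≤ exp t := by
      have := Real.add_one_le_exp t; linarith
    have h4 : exp (-t) ≤ 1/(1+t) := by
      rw [Real.exp_neg, one_div]
      exact inv_anti₀ (by linarith) h2
    have h5 : 1/(1+t) ≤ 1 - 1/(c*((n:ℝ)+1)) := by
      have e1 : 1 + t = (c*n+1)/(c*n) := by rw [ht_def]; field_simp
      have e2 : 1 - 1/(c*((n:ℝ)+1)) = (c*((n:ℝ)+1)-1)/(c*((n:ℝ)+1)) := by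
        field_simp
      rw [e1, one_div_div, e2, div_le_div_iff₀ (by linarith) hcn1]
      nlinarith
    linarith
  have h6 : exp (-1/c) = (exp (-t))^n := by
    rw [← Real.exp_nat_mul]
    congr 1
    rw [ht_def]
    field_simp
  rw [h6]
  exact pow_le_pow_left₀ (le_of_lt (Real.exp_pos _)) h1 n

lemma strong_bound (α c : ℝ) (hα1 : 1 < α) (hc : 1 ≤ c) (d : ℕ) (hd : 2 ≤ d) :
    exp (-1/c) * (1 - α ^ (-(1:ℝ)/2)) / c
      ≤ (1 - (1 - 1 / (c * d)) ^ d) - (1 - (1 - α ^ (-(1:ℝ)/2) / (c * d)) ^ d) := by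
  have hc0 : 0 < c := lt_of_lt_of_le one_pos hc
  have hα0 : 0 < α := lt_trans one_pos hα1
  set q : ℝ := α ^ (-(1:ℝ)/2) with hq_def
  have hq0 : 0 < q := Real.rpow_pos_of_pos hα0 _
  have hq1 : q < 1 := Real.rpow_lt_one_of_one_lt_of_neg hα1 (by norm_num)
  have hd2 : (2:ℝ) ≤ (d:ℝ) := by exact_mod_cast hd
  have hdpos : (0:ℝ) < d := by linarith
  have hcd : (2:ℝ) ≤ c*d := by nlinarith
  have hcd0 : (0:ℝ) < c*d := by linarith
  set a : ℝ := 1/(c*d) with ha_def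
  set b : ℝ := q/(c*d) with hb_def
  have ha_pos : 0 < a := by positivity
  have ha_half : a ≤ 1/2 := by
    rw [ha_def, div_le_div_iff₀ hcd0 (by norm_num)]
    linarith
  have hba : b ≤ a := by
    rw [ha_def, hb_def]
    exact (div_le_div_iff_of_pos_right hcd0).mpr hq1.le
  have hy0 : (0:ℝ) ≤ 1 - a := by linarith
  have hxy : 1 - a ≤ 1 - b := by linarith
  obtain ⟨n, rfl⟩ : ∃ n : ℕ, d = n + 1 := ⟨d - 1, by omega⟩
  have hn1 : 1 ≤ n := by omega
  have hfac := pow_sub_pow_ge_aux (1-b) (1-a) hy0 hxy n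
  have hkey : exp (-1/c) ≤ (1 - a)^n := by
    have h := key_exp_le c hc n hn1
    have hcast : ((n+1:ℕ):ℝ) = (n:ℝ)+1 := by push_cast; ring
    rw [ha_def, hcast]
    exact h
  have heq : ((n:ℝ)+1)*((1-b)-(1-a)) = (1-q)/c := by
    rw [ha_def, hb_def]
    have hcast : ((n+1:ℕ):ℝ) = (n:ℝ)+1 := by push_cast; ring
    rw [hcast] at hcd0 ⊢
    field_simp
    ring
  have h1q : 0 < 1 - q := by linarith
  have hyn : (0:ℝ) ≤ (1-a)^n := pow_nonneg hy0 n
  calc exp (-1/c) * (1 - q) / c = ((1-q)/c) * exp (-1/c) := by ring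
    _ ≤ ((1-q)/c) * (1-a)^n := mul_le_mul_of_nonneg_left hkey (by positivity)
    _ = ((n:ℝ)+1)*((1-b)-(1-a))*(1-a)^n := by rw [heq]
    _ ≤ (1-b)^(n+1) - (1-a)^(n+1) := hfac
    _ = (1 - (1 - a) ^ (n+1)) - (1 - (1 - b) ^ (n+1)) := by ring

theorem Delta_lower_bound (α c : ℝ) (hα1 : 1 < α) (hα2 : α ≤ 2) (hc : 1 ≤ c) :
    (∀ d : ℕ, 2 ≤ d →
      (1 - (1 - 1 / (c * d)) ^ d) - (1 - (1 - α ^ (-(1:ℝ)/2) / (c * d)) ^ d)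
        ≥ (exp (-1/c) - (5 * exp (-1/c) / c^2) / ((d : ℝ) - 1)) * (1 - α ^ (-(1:ℝ)/2)) / c) ∧
    ∃ ε : ℝ, 0 < ε ∧ ∃ D : ℕ, ∀ d : ℕ, D ≤ d →
      ε ≤ (1 - (1 - 1 / (c * d)) ^ d) - (1 - (1 - α ^ (-(1:ℝ)/2) / (c * d)) ^ d) := by
  have hc0 : 0 < c := lt_of_lt_of_le one_pos hc
  have hα0 : 0 < α := lt_trans one_pos hα1
  have hq0 : 0 < α ^ (-(1:ℝ)/2) := Real.rpow_pos_of_pos hα0 _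
  have hq1 : α ^ (-(1:ℝ)/2) < 1 := Real.rpow_lt_one_of_one_lt_of_neg hα1 (by norm_num)
  have h1q : (0:ℝ) < 1 - α ^ (-(1:ℝ)/2) := by linarith
  constructor
  · intro d hd
    have hstrong := strong_bound α c hα1 hc d hd
    have hd2 : (2:ℝ) ≤ (d:ℝ) := by exact_mod_cast hd
    have hA : 0 ≤ (5 * exp (-1/c) / c^2) / ((d : ℝ) - 1) := by
      apply div_nonneg (by positivity); linarith
    have hXY : exp (-1/c) - (5 * exp (-1/c) / c^2) / ((d : ℝ) - 1) ≤ exp (-1/c) := by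
      linarith
    have hmul := mul_le_mul_of_nonneg_right hXY h1q.le
    have := (div_le_div_iff_of_pos_right hc0).mpr hmul
    linarith
  · exact ⟨exp (-1/c) * (1 - α ^ (-(1:ℝ)/2)) / c,
      div_pos (mul_pos (Real.exp_pos _) h1q) hc0, 2,
      fun d hd => strong_bound α c hα1 hc d hd⟩
end

section
/- Let λ ≥ 1 be an integer, 1 < α ≤ 2, and set c = 2λ/(1 − α^{−1/4}). Define P_λ(d, p) = ∑_{i=λ}^{d} C(d, i)p^i(1−p)^{d−i}. Then for every integer d and every real x with 0 ≤ x ≤ λ/(c·d) and α^{1/4}x ≤ 1, each term ratio satisfies C(d, λ+j)x^{λ+j}(1−x)^{d−λ−j} ≤ α^{−(λ−1)/4}·C(d, λ+j)(α^{1/4}x)^{λ+j}(1−α^{1/4}x)^{d−λ−j} for all 0 ≤ j ≤ d−λ, and hence P_λ(d, x) ≤ α^{−(λ−1)/4}·P_λ(d, α^{1/4}x). -/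
set_option maxHeartbeats 1000000

open Real Finset

theorem Plambda_query_amplification (lam : ℕ) (hlam : 1 ≤ lam)
    (α : ℝ) (hα1 : 1 < α) (hα2 : α ≤ 2)
    (c : ℝ) (hc : c = 2 * lam / (1 - α ^ (-(1:ℝ)/4)))
    (d : ℕ) (hld : lam ≤ d) (x : ℝ) (hx0 : 0 ≤ x) (hx : x ≤ lam / (c * d))
    (hx1 : α ^ ((1:ℝ)/4) * x ≤ 1) :
    (∀ j : ℕ, j ≤ d - lam →
      (Nat.choose d (lam + j) : ℝ) * x ^ (lam + j) * (1 - x) ^ (d - lam - j)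
        ≤ α ^ (-((lam : ℝ) - 1)/4) *
          ((Nat.choose d (lam + j) : ℝ) * (α ^ ((1:ℝ)/4) * x) ^ (lam + j)
            * (1 - α ^ ((1:ℝ)/4) * x) ^ (d - lam - j))) ∧
    (∑ i ∈ Finset.Icc lam d, (Nat.choose d i : ℝ) * x ^ i * (1 - x) ^ (d - i))
      ≤ α ^ (-((lam : ℝ) - 1)/4) *
        ∑ i ∈ Finset.Icc lam d,
          (Nat.choose d i : ℝ) * (α ^ ((1:ℝ)/4) * x) ^ i * (1 - α ^ ((1:ℝ)/4) * x) ^ (d - i) := by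
  have hα0 : (0:ℝ) < α := lt_trans one_pos hα1
  set t : ℝ := α ^ ((1:ℝ)/4) with ht
  have ht1 : 1 < t := by
    rw [ht]
    exact (Real.one_lt_rpow_iff_of_pos hα0).mpr (Or.inl ⟨hα1, by norm_num⟩)
  have ht0 : 0 < t := lt_trans one_pos ht1
  have ht4 : t ^ (4:ℕ) = α := by
    rw [ht, ← Real.rpow_natCast (α ^ ((1:ℝ)/4)) 4, ← Real.rpow_mul hα0.le]
    norm_num
  have ht2 : t ≤ 2 := by
    have h4 : t ^ (4:ℕ) ≤ 2 ^ (4:ℕ) := by rw [ht4]; norm_num; linarith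
    exact le_of_pow_le_pow_left₀ (by norm_num) (by norm_num) h4
  have htinv : α ^ (-(1:ℝ)/4) = t⁻¹ := by
    rw [ht, ← Real.rpow_neg hα0.le]
    norm_num
  have hlamR : (1:ℝ) ≤ (lam:ℝ) := by exact_mod_cast hlam
  have hdR : (1:ℝ) ≤ (d:ℝ) := by exact_mod_cast le_trans hlam hld
  have htiv : (0:ℝ) < 1 - t⁻¹ := by
    have h1 : t⁻¹ < 1 := by rw [inv_lt_one_iff₀]; right; exact ht1
    linarith
  have hne : t - 1 ≠ 0 := sub_ne_zero.mpr (ne_of_gt ht1)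
  have hct : c * (t - 1) = 2 * lam * t := by
    have h2 : (1:ℝ) - t⁻¹ = (t - 1) / t := by field_simp
    rw [hc, htinv, h2, div_div_eq_mul_div, div_mul_cancel₀ _ hne]
  have hcpos : 0 < c := by
    have h1 : 0 < c * (t - 1) := by rw [hct]; positivity
    nlinarith
  have hcd : 0 < c * d := by positivity
  -- x * c * d ≤ lam
  have hxcd : x * (c * d) ≤ (lam:ℝ) := by
    have := (le_div_iff₀ hcd).mp hx
    linarith
  have hxd2 : x * d * t * 2 ≤ t - 1 := by
    have h1 : x * (c * d) * (t - 1) ≤ (lam:ℝ) * (t - 1) :=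
      mul_le_mul_of_nonneg_right hxcd (by linarith)
    have h2 : x * (c * d) * (t - 1) = x * d * (2 * lam * t) := by
      rw [show x * (c * d) * (t-1) = x * d * (c * (t-1)) by ring, hct]
    rw [h2] at h1
    nlinarith [mul_nonneg (mul_nonneg hx0 (le_trans zero_le_one hdR)) ht0.le]
  have htx : t * x ≤ (t - 1) / 2 := by nlinarith [mul_nonneg hx0 ht0.le]
  have h1tx : 0 < 1 - t * x := by linarith
  have hx1' : x ≤ 1 := by nlinarith
  have h1x0 : 0 ≤ 1 - x := by linarith
  -- main inequality for exponent d
  have hmain : (1 - x) ^ d ≤ t * (1 - t * x) ^ d := by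
    set y : ℝ := (t - 1) * x / (1 - t * x) with hy
    have hy0 : 0 ≤ y := div_nonneg (mul_nonneg (by linarith) hx0) h1tx.le
    have h1x : 1 - x = (1 - t * x) * (1 + y) := by
      rw [hy, mul_add, mul_one, mul_div_cancel₀ _ h1tx.ne']; ring
    have hydt : x * d * t ≤ 1 - t * x := by linarith
    have hy_dt : y * d * t ≤ t - 1 := by
      have hd1 : (x * d * t) / (1 - t * x) ≤ 1 := (div_le_one h1tx).mpr hydt
      have heq : y * d * t = (t - 1) * ((x * d * t) / (1 - t * x)) := by
        rw [hy]; field_simp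
      calc y * d * t = (t - 1) * ((x * d * t) / (1 - t * x)) := heq
        _ ≤ (t - 1) * 1 := mul_le_mul_of_nonneg_left hd1 (by linarith)
        _ = t - 1 := mul_one _
    have hdy1 : (d:ℝ) * y < 1 := by nlinarith
    have hy1 : y ≤ 1 := by nlinarith
    -- Bernoulli
    have hbern : 1 - (d:ℝ) * y ≤ (1 - y) ^ d := by
      have := one_add_mul_le_pow (a := -y) (by linarith) d
      calc 1 - (d:ℝ) * y = 1 + (d:ℝ) * (-y) := by ring
        _ ≤ (1 + -y) ^ d := this
        _ = (1 - y) ^ d := by ring_nf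
    have hsq : (1 + y) ^ d * (1 - y) ^ d ≤ 1 := by
      rw [← mul_pow]
      have h1 : (1 + y) * (1 - y) = 1 - y ^ 2 := by ring
      rw [h1]
      exact pow_le_one₀ (by nlinarith) (by nlinarith)
    have hp : (1 + y) ^ d * (1 - (d:ℝ) * y) ≤ 1 := by
      calc (1 + y) ^ d * (1 - (d:ℝ) * y) ≤ (1 + y) ^ d * (1 - y) ^ d :=
            mul_le_mul_of_nonneg_left hbern (pow_nonneg (by linarith) d)
        _ ≤ 1 := hsq
    have hty : 1 ≤ t * (1 - (d:ℝ) * y) := by nlinarith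
    have hyt : (1 + y) ^ d ≤ t := by
      have hpos : 0 < 1 - (d:ℝ) * y := by linarith
      nlinarith [pow_nonneg (by linarith : (0:ℝ) ≤ 1 + y) d]
    calc (1 - x) ^ d = (1 - t * x) ^ d * (1 + y) ^ d := by rw [h1x, mul_pow]
      _ ≤ (1 - t * x) ^ d * t := mul_le_mul_of_nonneg_left hyt (pow_nonneg h1tx.le d)
      _ = t * (1 - t * x) ^ d := by ring
  -- key for all m ≤ d
  have hkey : ∀ m, m ≤ d → (1 - x) ^ m ≤ t * (1 - t * x) ^ m := by
    intro m hmd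
    have hpos : 0 < (1 - t * x) ^ (d - m) := pow_pos h1tx _
    apply le_of_mul_le_mul_right _ hpos
    calc (1 - x) ^ m * (1 - t * x) ^ (d - m)
        ≤ (1 - x) ^ m * (1 - x) ^ (d - m) :=
          mul_le_mul_of_nonneg_left
            (pow_le_pow_left₀ h1tx.le (by nlinarith) _) (pow_nonneg h1x0 m)
      _ = (1 - x) ^ d := by rw [← pow_add, Nat.add_sub_cancel' hmd]
      _ ≤ t * (1 - t * x) ^ d := hmain
      _ = t * (1 - t * x) ^ m * (1 - t * x) ^ (d - m) := by
          rw [mul_assoc, ← pow_add, Nat.add_sub_cancel' hmd]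
  -- rpow bookkeeping
  have hA1 : α ^ (-((lam : ℝ) - 1)/4) * t ^ (lam - 1) = 1 := by
    have h1 : t ^ (lam - 1 : ℕ) = α ^ ((1:ℝ)/4 * ((lam:ℝ) - 1)) := by
      rw [ht, ← Real.rpow_natCast (α ^ ((1:ℝ)/4)) (lam - 1), ← Real.rpow_mul hα0.le]
      congr 1
      have : ((lam - 1 : ℕ) : ℝ) = (lam:ℝ) - 1 := by
        push_cast [Nat.cast_sub hlam]; ring
      rw [this]
    rw [h1, ← Real.rpow_add hα0,
      show -((lam:ℝ) - 1)/4 + (1:ℝ)/4 * ((lam:ℝ) - 1) = 0 by ring, Real.rpow_zero]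
  have hA0 : 0 ≤ α ^ (-((lam : ℝ) - 1)/4) := Real.rpow_nonneg hα0.le _
  have hAt : ∀ j : ℕ, α ^ (-((lam : ℝ) - 1)/4) * t ^ (lam + j) = t ^ (j + 1) := by
    intro j
    have h1 : t ^ (lam + j) = t ^ (lam - 1) * t ^ (j + 1) := by
      rw [← pow_add]; congr 1; omega
    rw [h1, ← mul_assoc, hA1, one_mul]
  have hterm : ∀ j : ℕ, j ≤ d - lam →
      (Nat.choose d (lam + j) : ℝ) * x ^ (lam + j) * (1 - x) ^ (d - lam - j)
        ≤ α ^ (-((lam : ℝ) - 1)/4) *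
          ((Nat.choose d (lam + j) : ℝ) * (t * x) ^ (lam + j)
            * (1 - t * x) ^ (d - lam - j)) := by
    intro j hj
    have hm := hkey (d - lam - j) (by omega)
    have hC : (0:ℝ) ≤ (Nat.choose d (lam + j) : ℝ) := Nat.cast_nonneg _
    have hrhs : α ^ (-((lam : ℝ) - 1)/4) *
        ((Nat.choose d (lam + j) : ℝ) * (t * x) ^ (lam + j)
          * (1 - t * x) ^ (d - lam - j))
        = (Nat.choose d (lam + j) : ℝ) * x ^ (lam + j) *
            (t ^ (j + 1) * (1 - t * x) ^ (d - lam - j)) := by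
      rw [mul_pow, ← hAt j]; ring
    rw [hrhs]
    have ht_le : t ≤ t ^ (j + 1) := by
      calc t = t ^ 1 := (pow_one t).symm
        _ ≤ t ^ (j + 1) := pow_le_pow_right₀ ht1.le (by omega)
    calc (Nat.choose d (lam + j) : ℝ) * x ^ (lam + j) * (1 - x) ^ (d - lam - j)
        ≤ (Nat.choose d (lam + j) : ℝ) * x ^ (lam + j) * (t * (1 - t * x) ^ (d - lam - j)) := by
          apply mul_le_mul_of_nonneg_left hm (by positivity)
      _ ≤ (Nat.choose d (lam + j) : ℝ) * x ^ (lam + j) *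
            (t ^ (j + 1) * (1 - t * x) ^ (d - lam - j)) := by
          apply mul_le_mul_of_nonneg_left _ (by positivity)
          exact mul_le_mul_of_nonneg_right ht_le (pow_nonneg h1tx.le _)
  refine ⟨hterm, ?_⟩
  rw [Finset.mul_sum]
  apply Finset.sum_le_sum
  intro i hi
  obtain ⟨hi1, hi2⟩ := Finset.mem_Icc.mp hi
  have h := hterm (i - lam) (by omega)
  rwa [Nat.add_sub_cancel' hi1, show d - lam - (i - lam) = d - i by omega] at h
end
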